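/- In the proof setting of the directed degree-3 theorem: let D be a strong s-quadrangular digraph with all out- and in-degrees at most 3 and a minimum cycle factor C₁ ∪ ⋯ ∪ C_t with t ≥ 2, chosen with C₁ as short as possible. If x ∈ C₁ dominates y ∈ C₂, then x has out-degree exactly 3 and there is a vertex z ∉ {x⁺, y} dominated by both x and y⁻ (where v⁺, v⁻ denote the successor and predecessor of v on its cycle). -/

import Mathlib

open Equiv Equiv.Perm in
lemma merge_swap_lt {V : Type*} [Fintype V] [DecidableEq V]
    (σ : Equiv.Perm V) (hfpf : ∀ v, σ v ≠ v) (a b : V)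
    (hab : ¬ σ.SameCycle a b) :
    Multiset.card (σ * Equiv.swap a b).cycleType < Multiset.card σ.cycleType := by
  classical
  have hane : a ≠ b := fun h => hab (h ▸ Equiv.Perm.SameCycle.refl σ a)
  set c := σ.cycleOf a with hc
  set d := σ.cycleOf b with hd
  have hca : ∀ v, σ.SameCycle a v → c v = σ v := fun v h => by
    rw [hc, Equiv.Perm.cycleOf_apply, if_pos h]
  have hcn : ∀ v, ¬ σ.SameCycle a v → c v = v := fun v h => by
    rw [hc, Equiv.Perm.cycleOf_apply, if_neg h]
  have hda : ∀ v, σ.SameCycle b v → d v = σ v := fun v h => by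
    rw [hd, Equiv.Perm.cycleOf_apply, if_pos h]
  have hdn : ∀ v, ¬ σ.SameCycle b v → d v = v := fun v h => by
    rw [hd, Equiv.Perm.cycleOf_apply, if_neg h]
  have hexa : ∀ v, σ.SameCycle a v → ¬ σ.SameCycle b v :=
    fun v h h' => hab (h.trans h'.symm)
  have hexb : ∀ v, σ.SameCycle b v → ¬ σ.SameCycle a v :=
    fun v h h' => hab (h'.trans h.symm)
  set m := d * c * Equiv.swap a b with hm
  have hma : m a = σ b := by
    rw [hm]
    simp only [Equiv.Perm.mul_apply, Equiv.swap_apply_left]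
    rw [hcn b (fun h => hab h), hda b (Equiv.Perm.SameCycle.refl σ b)]
  have hmb : m b = σ a := by
    rw [hm]
    simp only [Equiv.Perm.mul_apply, Equiv.swap_apply_right]
    rw [hca a (Equiv.Perm.SameCycle.refl σ a),
      hdn (σ a) (fun h => hab ((Equiv.Perm.sameCycle_apply_right.mp h).symm))]
  have hm1 : ∀ v, v ≠ a → v ≠ b → σ.SameCycle a v → m v = σ v := by
    intro v hva hvb h
    rw [hm]
    simp only [Equiv.Perm.mul_apply, Equiv.swap_apply_of_ne_of_ne hva hvb]
    rw [hca v h, hdn (σ v) (fun h' => hexa v h (Equiv.Perm.sameCycle_apply_right.mp h'))]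
  have hm2 : ∀ v, v ≠ a → v ≠ b → σ.SameCycle b v → m v = σ v := by
    intro v hva hvb h
    rw [hm]
    simp only [Equiv.Perm.mul_apply, Equiv.swap_apply_of_ne_of_ne hva hvb]
    rw [hcn v (hexb v h), hda v h]
  have hm3 : ∀ v, ¬ σ.SameCycle a v → ¬ σ.SameCycle b v → m v = v := by
    intro v h1 h2
    have hva : v ≠ a := fun h => h1 (h ▸ Equiv.Perm.SameCycle.refl σ a)
    have hvb : v ≠ b := fun h => h2 (h ▸ Equiv.Perm.SameCycle.refl σ b)
    rw [hm]
    simp only [Equiv.Perm.mul_apply, Equiv.swap_apply_of_ne_of_ne hva hvb]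
    rw [hcn v h1, hdn v h2]
  have step1 : ∀ v w, m v = w → m.SameCycle v w := fun v w h => ⟨1, by simpa using h⟩
  have hma' : m a ≠ a := by
    rw [hma]
    intro h
    exact hab (Equiv.Perm.SameCycle.symm ⟨1, by simpa using h⟩)
  have claimD : ∀ k : ℕ, m.SameCycle a ((σ ^ (k + 1)) b) := by
    intro k
    induction k with
    | zero => simpa [pow_one] using step1 a (σ b) hma
    | succ k ih =>
      set v := (σ ^ (k + 1)) b with hv
      have hscbv : σ.SameCycle b v := ⟨(k + 1 : ℤ), by
        rw [hv]; norm_cast⟩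
      have hnext : (σ ^ (k + 1 + 1)) b = σ v := by
        rw [hv, ← Equiv.Perm.mul_apply, ← pow_succ']
      by_cases hvb : v = b
      · rw [hnext, hvb]
        exact step1 a (σ b) hma
      · have hva : v ≠ a := fun h => hab ((h ▸ hscbv).symm)
        exact ih.trans (step1 v _ (by rw [hm2 v hva hvb hscbv, hnext]))
  have hDb : m.SameCycle a b := by
    have h1 := claimD (orderOf σ - 1)
    rw [Nat.sub_add_cancel (orderOf_pos σ)] at h1
    rwa [pow_orderOf_eq_one, Equiv.Perm.one_apply] at h1
  have claimA : m.SameCycle a (σ a) := hDb.trans (step1 b (σ a) hmb)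
  have claimC : ∀ k : ℕ, m.SameCycle a ((σ ^ (k + 1)) a) := by
    intro k
    induction k with
    | zero => simpa [pow_one] using claimA
    | succ k ih =>
      set v := (σ ^ (k + 1)) a with hv
      have hscav : σ.SameCycle a v := ⟨(k + 1 : ℤ), by rw [hv]; norm_cast⟩
      have hnext : (σ ^ (k + 1 + 1)) a = σ v := by
        rw [hv, ← Equiv.Perm.mul_apply, ← pow_succ']
      by_cases hva : v = a
      · rw [hnext, hva]
        exact claimA
      · have hvb : v ≠ b := fun h => hab (h ▸ hscav)
        exact ih.trans (step1 v _ (by rw [hm1 v hva hvb hscav, hnext]))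
  have hmcyc : m.IsCycle := by
    refine ⟨a, hma', fun y hy => ?_⟩
    by_cases hya : y = a
    · exact hya ▸ Equiv.Perm.SameCycle.refl m a
    by_cases hyb : y = b
    · exact hyb ▸ hDb
    have hsc : σ.SameCycle a y ∨ σ.SameCycle b y := by
      by_contra h
      push_neg at h
      exact hy (hm3 y h.1 h.2)
    rcases hsc with h | h
    · obtain ⟨i, hipos, _, hi⟩ := h.exists_pow_eq''
      obtain ⟨k, rfl⟩ : ∃ k, i = k + 1 := ⟨i - 1, by omega⟩
      exact hi ▸ claimC k
    · obtain ⟨i, hipos, _, hi⟩ := h.exists_pow_eq''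
      obtain ⟨k, rfl⟩ : ∃ k, i = k + 1 := ⟨i - 1, by omega⟩
      exact hi ▸ claimD k
  -- the rest of the permutation
  set ρ := σ * c⁻¹ * d⁻¹ with hρ
  have hρfix : ∀ v, (σ.SameCycle a v ∨ σ.SameCycle b v) → ρ v = v := by
    intro v hv
    rcases hv with h | h
    · have hdv : d⁻¹ v = v := by
        have := hdn v (hexa v h)
        calc d⁻¹ v = d⁻¹ (d v) := by rw [this]
          _ = v := Equiv.symm_apply_apply d v
      have h' : σ.SameCycle a (σ⁻¹ v) := Equiv.Perm.sameCycle_symm_apply_right.mpr h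
      have hcv : c⁻¹ v = σ⁻¹ v := by
        have h2 : c (σ⁻¹ v) = v := by rw [hca _ h', show ∀ (e : Equiv.Perm V) (u : V), e (e⁻¹ u) = u from fun e u => e.apply_symm_apply u]
        calc c⁻¹ v = c⁻¹ (c (σ⁻¹ v)) := by rw [h2]
          _ = σ⁻¹ v := Equiv.symm_apply_apply c _
      rw [hρ]
      simp only [Equiv.Perm.mul_apply]
      rw [hdv, hcv, show ∀ (e : Equiv.Perm V) (u : V), e (e⁻¹ u) = u from fun e u => e.apply_symm_apply u]
    · have h' : σ.SameCycle b (σ⁻¹ v) := Equiv.Perm.sameCycle_symm_apply_right.mpr h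
      have hdv : d⁻¹ v = σ⁻¹ v := by
        have h2 : d (σ⁻¹ v) = v := by rw [hda _ h', show ∀ (e : Equiv.Perm V) (u : V), e (e⁻¹ u) = u from fun e u => e.apply_symm_apply u]
        calc d⁻¹ v = d⁻¹ (d (σ⁻¹ v)) := by rw [h2]
          _ = σ⁻¹ v := Equiv.symm_apply_apply d _
      have hcv : c⁻¹ (σ⁻¹ v) = σ⁻¹ v := by
        have := hcn (σ⁻¹ v) (hexb _ h')
        calc c⁻¹ (σ⁻¹ v) = c⁻¹ (c (σ⁻¹ v)) := by rw [this]
          _ = σ⁻¹ v := Equiv.symm_apply_apply c _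
      rw [hρ]
      simp only [Equiv.Perm.mul_apply]
      rw [hdv, hcv, show ∀ (e : Equiv.Perm V) (u : V), e (e⁻¹ u) = u from fun e u => e.apply_symm_apply u]
  have hdisj_ρm : Equiv.Perm.Disjoint ρ m := by
    intro v
    by_cases hv : σ.SameCycle a v ∨ σ.SameCycle b v
    · exact Or.inl (hρfix v hv)
    · push_neg at hv
      exact Or.inr (hm3 v hv.1 hv.2)
  have hdisj_ρdc : Equiv.Perm.Disjoint ρ (d * c) := by
    intro v
    by_cases hv : σ.SameCycle a v ∨ σ.SameCycle b v
    · exact Or.inl (hρfix v hv)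
    · push_neg at hv
      refine Or.inr ?_
      simp only [Equiv.Perm.mul_apply]
      rw [hcn v hv.1, hdn v hv.2]
  have hdisj_dc : Equiv.Perm.Disjoint d c := by
    intro v
    by_cases hv : σ.SameCycle b v
    · exact Or.inr (hcn v (hexb v hv))
    · exact Or.inl (hdn v hv)
  have hccyc : c.IsCycle := Equiv.Perm.isCycle_cycleOf σ (hfpf a)
  have hdcyc : d.IsCycle := Equiv.Perm.isCycle_cycleOf σ (hfpf b)
  have hfact : σ = ρ * (d * c) := by rw [hρ]; group
  have hfact2 : σ * Equiv.swap a b = ρ * m := by rw [hρ, hm]; group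
  have hσct : Multiset.card σ.cycleType = Multiset.card ρ.cycleType + 2 := by
    rw [hfact, hdisj_ρdc.cycleType_mul, hdisj_dc.cycleType_mul,
      hdcyc.cycleType, hccyc.cycleType]
    simp
  have hτct : Multiset.card (σ * Equiv.swap a b).cycleType
      = Multiset.card ρ.cycleType + 1 := by
    rw [hfact2, hdisj_ρm.cycleType_mul, hmcyc.cycleType]
    simp
  omega



/-- Out-neighborhood of `x` in the digraph with arc relation `A`. -/
def outN {V : Type*} (A : V → V → Prop) (x : V) : Set V := {y | A x y}

/-- In-neighborhood of `x` in the digraph with arc relation `A`. -/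
def inN {V : Type*} (A : V → V → Prop) (x : V) : Set V := {y | A y x}

/-- `S` is a q-set for the neighborhood function `N`: it has at least two
vertices and every member shares an `N`-neighbor with another member. -/
def IsQSet {V : Type*} (N : V → Set V) (S : Set V) : Prop :=
  2 ≤ S.ncard ∧ ∀ u ∈ S, ∃ v ∈ S, v ≠ u ∧ (N u ∩ N v).Nonempty

/-- The union of all pairwise common `N`-neighborhoods of distinct members of `S`. -/
def commonUnion {V : Type*} (N : V → Set V) (S : Set V) : Set V :=
  {w | ∃ u ∈ S, ∃ v ∈ S, u ≠ v ∧ w ∈ N u ∧ w ∈ N v}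

/-- A digraph is s-quadrangular if every q⁺-set and every q⁻-set `S` has
pairwise common neighborhood union of size at least `|S|`. -/
def SQuadD {V : Type*} (A : V → V → Prop) : Prop :=
  (∀ S : Set V, IsQSet (outN A) S → S.ncard ≤ (commonUnion (outN A) S).ncard) ∧
  (∀ S : Set V, IsQSet (inN A) S → S.ncard ≤ (commonUnion (inN A) S).ncard)

/-- A digraph is strong if there is a directed path between every ordered pair. -/
def StrongD {V : Type*} (A : V → V → Prop) : Prop :=
  ∀ x y : V, Relation.ReflTransGen A x y

/-- A cycle factor of a loopless digraph, encoded as a fixed-point-free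
permutation following the arcs: its cycles are the vertex-disjoint directed
cycles covering all vertices. -/
def IsCycleFactor {V : Type*} (A : V → V → Prop) (σ : Equiv.Perm V) : Prop :=
  ∀ v, A v (σ v) ∧ σ v ≠ v

/-- In a strong s-quadrangular digraph with all out- and in-degrees at most 3,
take a cycle factor `σ` with the minimum number `t ≥ 2` of cycles, chosen so
that no minimum cycle factor has a cycle shorter than the cycle `C₁` of `x`.
If `x` dominates a vertex `y` on a different cycle, then `x` has out-degree
exactly 3 and some vertex `z ∉ {x⁺, y}` is dominated by both `x` and `y⁻`. -/

theorem squad_deg3_dominating_structure {V : Type*} [Fintype V] [DecidableEq V]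
    (A : V → V → Prop) (hloopless : ∀ v, ¬ A v v)
    (hstrong : StrongD A) (hsq : SQuadD A)
    (hdeg : ∀ v, (outN A v).ncard ≤ 3 ∧ (inN A v).ncard ≤ 3)
    (σ : Equiv.Perm V) (hσ : IsCycleFactor A σ)
    (hmin : ∀ τ : Equiv.Perm V, IsCycleFactor A τ →
      Multiset.card σ.cycleType ≤ Multiset.card τ.cycleType)
    (ht : 2 ≤ Multiset.card σ.cycleType)
    (x y : V) (hxy : A x y) (hdiff : ¬ σ.SameCycle x y)
    (hshort : ∀ τ : Equiv.Perm V, IsCycleFactor A τ →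
      Multiset.card τ.cycleType = Multiset.card σ.cycleType →
      ∀ w : V, (σ.cycleOf x).support.card ≤ (τ.cycleOf w).support.card) :
    (outN A x).ncard = 3 ∧
      ∃ z : V, z ≠ σ x ∧ z ≠ y ∧ A x z ∧ A (σ⁻¹ y) z := by
  classical
  set b := σ⁻¹ y with hb
  have hσb : σ b = y := Equiv.apply_symm_apply σ y
  have hAby : A b y := by
    have := (hσ b).1
    rwa [hσb] at this
  have hscby : σ.SameCycle b y := ⟨1, by simpa using hσb⟩
  have hxb : ¬ σ.SameCycle x b := fun h => hdiff (h.trans hscby)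
  have hxbne : x ≠ b := fun h => hxb (h ▸ Equiv.Perm.SameCycle.refl σ x)
  -- σ x ∉ outN A b, else we could merge the two cycles
  have hkey : ¬ A b (σ x) := by
    intro hAbσx
    set τ := σ * Equiv.swap x b with hτ
    have hτcf : IsCycleFactor A τ := by
      intro v
      by_cases hvx : v = x
      · subst hvx
        have : τ v = y := by rw [hτ]; simp [hσb]
        rw [this]
        refine ⟨hxy, fun h => hdiff (h ▸ Equiv.Perm.SameCycle.refl σ y)⟩
      by_cases hvb : v = b
      · have hτb : τ b = σ x := by rw [hτ]; simp
        rw [hvb, hτb]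
        refine ⟨hAbσx, fun h => hxb ⟨1, by simpa using h⟩⟩
      · have : τ v = σ v := by
          rw [hτ]; simp [Equiv.swap_apply_of_ne_of_ne hvx hvb]
        rw [this]
        exact hσ v
    have h1 := hmin τ hτcf
    have h2 := merge_swap_lt σ (fun v => (hσ v).2) x b hxb
    rw [← hτ] at h2
    omega
  -- the q⁺-set {x, b}
  have hy_mem : y ∈ outN A x ∩ outN A b := ⟨hxy, hAby⟩
  have hcu : commonUnion (outN A) {x, b} = outN A x ∩ outN A b := by
    ext w
    constructor
    · rintro ⟨u, hu, v, hv, huv, hwu, hwv⟩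
      rcases hu with rfl | hu
      · rcases hv with rfl | hv
        · exact absurd rfl huv
        · rw [Set.mem_singleton_iff] at hv; subst hv; exact ⟨hwu, hwv⟩
      · rw [Set.mem_singleton_iff] at hu; subst hu
        rcases hv with rfl | hv
        · exact ⟨hwv, hwu⟩
        · rw [Set.mem_singleton_iff] at hv; subst hv; exact absurd rfl huv
    · rintro ⟨h1, h2⟩
      exact ⟨x, Or.inl rfl, b, Or.inr rfl, hxbne, h1, h2⟩
  have hqset : IsQSet (outN A) {x, b} := by
    constructor
    · rw [Set.ncard_pair hxbne]
    · intro u hu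
      rcases hu with rfl | hu
      · exact ⟨b, Or.inr rfl, Ne.symm hxbne, ⟨y, hxy, hAby⟩⟩
      · rw [Set.mem_singleton_iff] at hu; subst hu
        exact ⟨x, Or.inl rfl, hxbne, ⟨y, hAby, hxy⟩⟩
  have h2card : 2 ≤ (outN A x ∩ outN A b).ncard := by
    have := hsq.1 {x, b} hqset
    rwa [hcu, Set.ncard_pair hxbne] at this
  -- find z
  have hz : ∃ z ∈ outN A x ∩ outN A b, z ≠ y := by
    by_contra h
    push_neg at h
    have hsub : outN A x ∩ outN A b ⊆ {y} := fun w hw => h w hw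
    have := Set.ncard_le_ncard hsub (Set.finite_singleton y)
    rw [Set.ncard_singleton] at this
    omega
  obtain ⟨z, ⟨hzx, hzb⟩, hzy⟩ := hz
  have hzσx : z ≠ σ x := fun h => hkey (h ▸ hzb)
  have hyσx : y ≠ σ x := fun h => hdiff ⟨1, by simpa using h.symm⟩
  refine ⟨?_, z, hzσx, hzy, hzx, hzb⟩
  -- out-degree exactly 3
  have hsub : ({y, σ x, z} : Set V) ⊆ outN A x := by
    rintro w (rfl | rfl | rfl)
    · exact hxy
    · exact (hσ x).1
    · exact hzx
  have h3 : ({y, σ x, z} : Set V).ncard = 3 := by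
    rw [Set.ncard_insert_of_notMem (by simp [hyσx, hzy.symm]),
      Set.ncard_insert_of_notMem (by simp [hzσx.symm]), Set.ncard_singleton]
  have hle := Set.ncard_le_ncard hsub (Set.toFinite _)
  have := (hdeg x).1
  omega
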